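/- The gap between the expected Bregman divergence of labels from predictions and the proper calibration error equals the expected drop of F under conditioning: E[D_F(Y, g(X))] − CE_F(g) = E[F(Y)] − E[F(E[Y|g(X)])]. -/

import Mathlib

open scoped NNReal


open MeasureTheory ProbabilityTheory
open scoped RealInnerProductSpace

/-- Bregman divergence generated by `F`. -/
noncomputable def breg {k : ℕ} (F : EuclideanSpace ℝ (Fin k) → ℝ)
    (p q : EuclideanSpace ℝ (Fin k)) : ℝ :=
  F p - F q - ⟪gradient F q, p - q⟫

/-- The probability simplex in `ℝ^k`. -/
def simplexE (k : ℕ) : Set (EuclideanSpace ℝ (Fin k)) :=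
  {p | (∀ i, 0 ≤ p i) ∧ ∑ i, p i = 1}


lemma condexp_clm_comm {α : Type*} {m m0 : MeasurableSpace α} (hm : m ≤ m0)
    {μ : Measure α} [IsFiniteMeasure μ]
    {E F : Type*} [NormedAddCommGroup E] [NormedSpace ℝ E] [CompleteSpace E]
    [NormedAddCommGroup F] [NormedSpace ℝ F] [CompleteSpace F]
    (L : E →L[ℝ] F) {f : α → E} (hf : Integrable f μ) :
    (fun ω => L ((MeasureTheory.condExp m μ f) ω)) =ᵐ[μ]
      MeasureTheory.condExp m μ (fun ω => L (f ω)) := by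
  refine ae_eq_condExp_of_forall_setIntegral_eq hm (L.integrable_comp hf) ?_ ?_ ?_
  · intro s _ _
    exact (L.integrable_comp integrable_condExp).integrableOn
  · intro s hs hμs
    rw [L.integral_comp_comm integrable_condExp.integrableOn,
      setIntegral_condExp hm hf hs, ← L.integral_comp_comm hf.integrableOn]
  · exact (L.continuous.comp_stronglyMeasurable (stronglyMeasurable_condExp (m := m))).aestronglyMeasurable

lemma simplexE_norm_le {k : ℕ} {p : EuclideanSpace ℝ (Fin k)} (hp : p ∈ simplexE k) :
    ‖p‖ ≤ 1 := by
  obtain ⟨hnn, hsum⟩ := hp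
  rw [EuclideanSpace.norm_eq]
  have h1 : ∀ i, ‖p i‖ ^ 2 ≤ p i := by
    intro i
    have hle : p i ≤ 1 := by
      calc p i ≤ ∑ j, p j := Finset.single_le_sum (fun j _ => hnn j) (Finset.mem_univ i)
      _ = 1 := hsum
    rw [Real.norm_eq_abs, abs_of_nonneg (hnn i)]
    nlinarith [hnn i]
  calc Real.sqrt (∑ i, ‖p i‖ ^ 2) ≤ Real.sqrt (∑ i, p i) :=
        Real.sqrt_le_sqrt (Finset.sum_le_sum fun i _ => h1 i)
  _ = 1 := by rw [hsum, Real.sqrt_one]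

lemma euclid_abs_apply_le_norm {k : ℕ} (x : EuclideanSpace ℝ (Fin k)) (i : Fin k) :
    |x i| ≤ ‖x‖ := by
  rw [EuclideanSpace.norm_eq]
  calc |x i| = Real.sqrt (‖x i‖ ^ 2) := by
        rw [Real.sqrt_sq_eq_abs, Real.norm_eq_abs, abs_abs]
  _ ≤ Real.sqrt (∑ j, ‖x j‖ ^ 2) :=
        Real.sqrt_le_sqrt (Finset.single_le_sum
          (fun j _ => sq_nonneg ‖x j‖) (Finset.mem_univ i))

lemma isCompact_simplexE (k : ℕ) : IsCompact (simplexE k) := by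
  have hclosed : IsClosed (simplexE k) := by
    have h1 : IsClosed {p : EuclideanSpace ℝ (Fin k) | ∀ i, 0 ≤ p i} := by
      have : {p : EuclideanSpace ℝ (Fin k) | ∀ i, 0 ≤ p i}
          = ⋂ i, {p | 0 ≤ p i} := by ext p; simp
      rw [this]
      exact isClosed_iInter fun i =>
        isClosed_le continuous_const (EuclideanSpace.proj i).continuous
    have h2 : IsClosed {p : EuclideanSpace ℝ (Fin k) | ∑ i, p i = 1} :=
      isClosed_eq (continuous_finset_sum _ fun i _ => (EuclideanSpace.proj i).continuous)
        continuous_const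
    exact h1.inter h2
  exact (isCompact_closedBall (0 : EuclideanSpace ℝ (Fin k)) 1).of_isClosed_subset hclosed
    (fun p hp => by simpa [Metric.mem_closedBall, dist_eq_norm] using simplexE_norm_le hp)

/-- `E[D_F(Y, g(X))] − CE_F(g) = E[F(Y)] − E[F(E[Y|g(X)])]`. -/
theorem bregman_gap_eq_expected_drop
    {Ω 𝒳 : Type*} [MeasurableSpace Ω] [MeasurableSpace 𝒳]
    (μ : Measure Ω) [IsProbabilityMeasure μ] {k : ℕ}
    (X : Ω → 𝒳) (Y : Ω → EuclideanSpace ℝ (Fin k))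
    (g : 𝒳 → EuclideanSpace ℝ (Fin k))
    (F : EuclideanSpace ℝ (Fin k) → ℝ)
    (hX : Measurable X) (hY : Measurable Y) (hg : Measurable g)
    (hYoh : ∀ ω, ∃ i, Y ω = EuclideanSpace.single i 1)
    (hgs : ∀ x, g x ∈ simplexE k)
    (U : Set (EuclideanSpace ℝ (Fin k))) (hU : IsOpen U) (hUs : simplexE k ⊆ U)
    (hF : ConvexOn ℝ Set.univ F)
    (hFd : ∀ p ∈ U, DifferentiableAt ℝ F p)
    (hFc : ContinuousOn F (simplexE k))
    (hgFc : ContinuousOn (gradient F) (simplexE k)) :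
    (∫ ω, breg F (Y ω) (g (X ω)) ∂μ)
      - (∫ ω, breg F
            ((μ[Y | MeasurableSpace.comap (fun ω' => g (X ω')) inferInstance]) ω)
            (g (X ω)) ∂μ)
      = (∫ ω, F (Y ω) ∂μ)
        - ∫ ω, F ((μ[Y | MeasurableSpace.comap (fun ω' => g (X ω')) inferInstance]) ω) ∂μ := by
  classical
  have hgX : Measurable (fun ω' => g (X ω')) := hg.comp hX
  have hm : MeasurableSpace.comap (fun ω' => g (X ω')) inferInstance
      ≤ ‹MeasurableSpace Ω› := hgX.comap_le
  set Z : Ω → EuclideanSpace ℝ (Fin k) :=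
    MeasureTheory.condExp
      (MeasurableSpace.comap (fun ω' => g (X ω')) inferInstance) μ Y with hZ_def
  -- continuity of F
  have hFcont : Continuous F :=
    continuousOn_univ.mp (hF.continuousOn isOpen_univ)
  -- Y lands in the simplex
  have hYs : ∀ ω, Y ω ∈ simplexE k := by
    intro ω
    obtain ⟨i, hi⟩ := hYoh ω
    rw [hi]
    constructor
    · intro j
      rw [EuclideanSpace.single_apply]
      split <;> norm_num
    · simp [EuclideanSpace.single_apply]
  have hYnorm : ∀ ω, ‖Y ω‖ ≤ 1 := fun ω => simplexE_norm_le (hYs ω)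
  have hYint : Integrable Y μ :=
    (integrable_const (1 : ℝ)).mono' hY.aestronglyMeasurable (ae_of_all _ hYnorm)
  -- components of Z
  have hZi : ∀ i, (fun ω => Z ω i) =ᵐ[μ]
      MeasureTheory.condExp
        (MeasurableSpace.comap (fun ω' => g (X ω')) inferInstance) μ (fun ω => Y ω i) := by
    intro i
    have := condexp_clm_comm hm (EuclideanSpace.proj (𝕜 := ℝ) i) hYint
    simpa using this
  have hYi_bdd : ∀ i ω, |Y ω i| ≤ 1 := by
    intro i ω
    obtain ⟨j, hj⟩ := hYoh ω
    rw [hj, EuclideanSpace.single_apply]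
    split <;> norm_num
  have hZi_bdd : ∀ i, ∀ᵐ ω ∂μ, |Z ω i| ≤ 1 := by
    intro i
    have h1 : ∀ᵐ ω ∂μ, |(MeasureTheory.condExp
        (MeasurableSpace.comap (fun ω' => g (X ω')) inferInstance) μ
        (fun ω => Y ω i)) ω| ≤ ((1 : ℝ≥0) : ℝ) :=
      ae_bdd_condExp_of_ae_bdd (ae_of_all _ (fun ω => by simpa using hYi_bdd i ω))
    filter_upwards [h1, hZi i] with ω h1ω h2ω
    rw [h2ω]
    simpa using h1ω
  -- a.e. bound on ‖Z‖
  have hZnorm : ∀ᵐ ω ∂μ, ‖Z ω‖ ≤ Real.sqrt k := by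
    have hall : ∀ᵐ ω ∂μ, ∀ i, |Z ω i| ≤ 1 := (ae_all_iff).2 hZi_bdd
    filter_upwards [hall] with ω hω
    rw [EuclideanSpace.norm_eq]
    calc Real.sqrt (∑ i, ‖Z ω i‖ ^ 2) ≤ Real.sqrt (∑ _i : Fin k, (1 : ℝ)) := by
          apply Real.sqrt_le_sqrt
          apply Finset.sum_le_sum
          intro i _
          have := hω i
          rw [Real.norm_eq_abs]
          nlinarith [abs_nonneg (Z ω i)]
    _ = Real.sqrt k := by simp
  -- measurability of Z
  have hZsm : StronglyMeasurable[MeasurableSpace.comap (fun ω' => g (X ω')) inferInstance] Z :=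
    stronglyMeasurable_condExp
  have hZmeas : Measurable Z := (hZsm.mono hm).measurable
  have hZint : Integrable Z μ := integrable_condExp
  -- bound on F over a ball
  set r : ℝ := 1 + Real.sqrt k with hr_def
  have hr1 : (1 : ℝ) ≤ r := by
    have := Real.sqrt_nonneg (k : ℝ); simp only [hr_def]; linarith
  have hrs : Real.sqrt k ≤ r := by simp only [hr_def]; linarith
  obtain ⟨CF, hCF⟩ := (isCompact_closedBall (0 : EuclideanSpace ℝ (Fin k)) r
    ).exists_bound_of_continuousOn hFcont.continuousOn
  have hball : ∀ p : EuclideanSpace ℝ (Fin k), ‖p‖ ≤ r → ‖F p‖ ≤ CF := by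
    intro p hp
    exact hCF p (by simpa [Metric.mem_closedBall, dist_eq_norm] using hp)
  -- gradient bound on the simplex
  obtain ⟨M, hM⟩ := (isCompact_simplexE k).exists_bound_of_continuousOn hgFc
  -- the gradient composed map
  set V : Ω → EuclideanSpace ℝ (Fin k) := fun ω => gradient F (g (X ω)) with hV_def
  have hVm : Measurable[MeasurableSpace.comap (fun ω' => g (X ω')) inferInstance] V := by
    have hφ : Measurable[MeasurableSpace.comap (fun ω' => g (X ω')) inferInstance]
        (fun ω' => g (X ω')) := Measurable.of_comap_le le_rfl
    have hφ' : Measurable[MeasurableSpace.comap (fun ω' => g (X ω')) inferInstance]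
        (fun ω' => (⟨g (X ω'), hgs (X ω')⟩ : simplexE k)) := hφ.subtype_mk
    have hrest : Continuous ((simplexE k).restrict (gradient F)) :=
      continuousOn_iff_continuous_restrict.mp hgFc
    exact hrest.measurable.comp hφ'
  have hVmeas : Measurable V := hVm.mono hm le_rfl
  have hVbd : ∀ ω, ‖V ω‖ ≤ M := fun ω => hM _ (hgs (X ω))
  have hgXnorm : ∀ ω, ‖g (X ω)‖ ≤ 1 := fun ω => simplexE_norm_le (hgs (X ω))
  -- integrability of all pieces
  have hFY_int : Integrable (fun ω => F (Y ω)) μ :=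
    (integrable_const CF).mono' (hFcont.measurable.comp hY).aestronglyMeasurable
      (ae_of_all _ fun ω => hball _ ((hYnorm ω).trans hr1))
  have hFgX_int : Integrable (fun ω => F (g (X ω))) μ :=
    (integrable_const CF).mono' (hFcont.measurable.comp hgX).aestronglyMeasurable
      (ae_of_all _ fun ω => hball _ ((hgXnorm ω).trans hr1))
  have hFZ_int : Integrable (fun ω => F (Z ω)) μ := by
    refine (integrable_const CF).mono' (hFcont.measurable.comp hZmeas).aestronglyMeasurable ?_
    filter_upwards [hZnorm] with ω hω
    exact hball _ (hω.trans hrs)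
  have hIP_int : ∀ (W : Ω → EuclideanSpace ℝ (Fin k)), Measurable W → (c : ℝ) →
      (∀ᵐ ω ∂μ, ‖W ω‖ ≤ c) → Integrable (fun ω => ⟪V ω, W ω⟫) μ := by
    intro W hW c hc
    refine (integrable_const (M * c)).mono' (hVmeas.inner hW).aestronglyMeasurable ?_
    filter_upwards [hc] with ω hω
    calc ‖⟪V ω, W ω⟫‖ ≤ ‖V ω‖ * ‖W ω‖ := norm_inner_le_norm _ _
    _ ≤ M * c := by
        have h2 := hVbd ω
        nlinarith [norm_nonneg (W ω), norm_nonneg (V ω)]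
  have hIPY_int : Integrable (fun ω => ⟪V ω, Y ω⟫) μ :=
    hIP_int Y hY 1 (ae_of_all _ hYnorm)
  have hIPg_int : Integrable (fun ω => ⟪V ω, g (X ω)⟫) μ :=
    hIP_int _ hgX 1 (ae_of_all _ hgXnorm)
  have hIPZ_int : Integrable (fun ω => ⟪V ω, Z ω⟫) μ :=
    hIP_int Z hZmeas (Real.sqrt k) hZnorm
  -- componentwise integrability
  have hVi_bdd : ∀ i ω, |V ω i| ≤ M :=
    fun i ω => (euclid_abs_apply_le_norm (V ω) i).trans (hVbd ω)
  have hVi_meas : ∀ i, Measurable fun ω => V ω i :=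
    fun i => (EuclideanSpace.proj (𝕜 := ℝ) i).continuous.measurable.comp hVmeas
  have hVi_sm : ∀ i, StronglyMeasurable[MeasurableSpace.comap
      (fun ω' => g (X ω')) inferInstance] (fun ω => V ω i) :=
    fun i => (EuclideanSpace.proj (𝕜 := ℝ) i).continuous.comp_stronglyMeasurable
      hVm.stronglyMeasurable
  have hYi_int : ∀ i, Integrable (fun ω => Y ω i) μ := by
    intro i
    refine (integrable_const (1 : ℝ)).mono'
      (((EuclideanSpace.proj (𝕜 := ℝ) i).continuous.measurable.comp hY)).aestronglyMeasurable
      (ae_of_all _ fun ω => by simpa using hYi_bdd i ω)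
  have hViYi_int : ∀ i, Integrable (fun ω => V ω i * Y ω i) μ := by
    intro i
    refine (integrable_const (M * 1)).mono'
      ((hVi_meas i).mul ((EuclideanSpace.proj (𝕜 := ℝ) i).continuous.measurable.comp
        hY)).aestronglyMeasurable (ae_of_all _ fun ω => ?_)
    rw [norm_mul]
    have h1 := hVi_bdd i ω
    have h2 := hYi_bdd i ω
    have h3 : (0:ℝ) ≤ |V ω i| := abs_nonneg _
    simp only [Real.norm_eq_abs]
    nlinarith [abs_nonneg (Y ω i)]
  have hViZi_int : ∀ i, Integrable (fun ω => V ω i * Z ω i) μ := by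
    intro i
    refine (integrable_const (M * 1)).mono'
      ((hVi_meas i).mul ((EuclideanSpace.proj (𝕜 := ℝ) i).continuous.measurable.comp
        hZmeas)).aestronglyMeasurable ?_
    filter_upwards [hZi_bdd i] with ω h2
    rw [norm_mul]
    have h1 := hVi_bdd i ω
    simp only [Real.norm_eq_abs]
    nlinarith [abs_nonneg (Z ω i), abs_nonneg (V ω i)]
  -- key componentwise identity
  have key : ∀ i : Fin k, ∫ ω, V ω i * Y ω i ∂μ = ∫ ω, V ω i * Z ω i ∂μ := by
    intro i
    have hpull : MeasureTheory.condExp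
        (MeasurableSpace.comap (fun ω' => g (X ω')) inferInstance) μ
        ((fun ω => V ω i) * (fun ω => Y ω i)) =ᵐ[μ]
        (fun ω => V ω i) * MeasureTheory.condExp
        (MeasurableSpace.comap (fun ω' => g (X ω')) inferInstance) μ (fun ω => Y ω i) :=
      condExp_stronglyMeasurable_mul_of_bound hm (hVi_sm i) (hYi_int i) M
        (ae_of_all _ fun ω => by simpa using hVi_bdd i ω)
    calc ∫ ω, V ω i * Y ω i ∂μ
        = ∫ ω, MeasureTheory.condExp
            (MeasurableSpace.comap (fun ω' => g (X ω')) inferInstance) μ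
            ((fun ω => V ω i) * (fun ω => Y ω i)) ω ∂μ :=
          (integral_condExp hm).symm
      _ = ∫ ω, V ω i * Z ω i ∂μ := by
          refine integral_congr_ae ?_
          filter_upwards [hpull, hZi i] with ω h1 h2
          rw [h1, Pi.mul_apply, h2]
  -- inner products as sums
  have hinner_sum : ∀ (x y : EuclideanSpace ℝ (Fin k)), ⟪x, y⟫ = ∑ i, x i * y i := by
    intro x y
    rw [PiLp.inner_apply]
    exact Finset.sum_congr rfl fun i _ => by rw [RCLike.inner_apply, conj_trivial, mul_comm]
  have hinner_eq : ∫ ω, ⟪V ω, Y ω⟫ ∂μ = ∫ ω, ⟪V ω, Z ω⟫ ∂μ := by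
    have e1 : ∫ ω, ⟪V ω, Y ω⟫ ∂μ = ∑ i, ∫ ω, V ω i * Y ω i ∂μ := by
      rw [← integral_finset_sum _ (fun i _ => hViYi_int i)]
      exact integral_congr_ae (ae_of_all _ fun ω => hinner_sum _ _)
    have e2 : ∫ ω, ⟪V ω, Z ω⟫ ∂μ = ∑ i, ∫ ω, V ω i * Z ω i ∂μ := by
      rw [← integral_finset_sum _ (fun i _ => hViZi_int i)]
      exact integral_congr_ae (ae_of_all _ fun ω => hinner_sum _ _)
    rw [e1, e2]
    exact Finset.sum_congr rfl fun i _ => key i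
  -- expand the two Bregman integrals
  have hb1 : ∫ ω, breg F (Y ω) (g (X ω)) ∂μ
      = (∫ ω, F (Y ω) ∂μ) - (∫ ω, F (g (X ω)) ∂μ)
        - ((∫ ω, ⟪V ω, Y ω⟫ ∂μ) - ∫ ω, ⟪V ω, g (X ω)⟫ ∂μ) := by
    have e : (fun ω => breg F (Y ω) (g (X ω)))
        = fun ω => F (Y ω) - F (g (X ω)) - (⟪V ω, Y ω⟫ - ⟪V ω, g (X ω)⟫) :=
      funext fun ω => by rw [breg, inner_sub_right]
    have i1 : Integrable (fun ω => F (Y ω) - F (g (X ω))) μ := hFY_int.sub hFgX_int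
    have i2 : Integrable (fun ω => ⟪V ω, Y ω⟫ - ⟪V ω, g (X ω)⟫) μ := hIPY_int.sub hIPg_int
    rw [e, integral_sub i1 i2, integral_sub hFY_int hFgX_int, integral_sub hIPY_int hIPg_int]
  have hb2 : ∫ ω, breg F (Z ω) (g (X ω)) ∂μ
      = (∫ ω, F (Z ω) ∂μ) - (∫ ω, F (g (X ω)) ∂μ)
        - ((∫ ω, ⟪V ω, Z ω⟫ ∂μ) - ∫ ω, ⟪V ω, g (X ω)⟫ ∂μ) := by
    have e : (fun ω => breg F (Z ω) (g (X ω)))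
        = fun ω => F (Z ω) - F (g (X ω)) - (⟪V ω, Z ω⟫ - ⟪V ω, g (X ω)⟫) :=
      funext fun ω => by rw [breg, inner_sub_right]
    have i1 : Integrable (fun ω => F (Z ω) - F (g (X ω))) μ := hFZ_int.sub hFgX_int
    have i2 : Integrable (fun ω => ⟪V ω, Z ω⟫ - ⟪V ω, g (X ω)⟫) μ := hIPZ_int.sub hIPg_int
    rw [e, integral_sub i1 i2, integral_sub hFZ_int hFgX_int, integral_sub hIPZ_int hIPg_int]
  rw [hb1, hb2, hinner_eq]
  ring
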